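/- Let J_X, J_Z ∈ 𝔽₂^{k×n} satisfy H_X J_Zᵀ = 0, H_Z J_Xᵀ = 0, and J_X J_Zᵀ = E_k. Then the logical generator matrices of the branch-sticker deformed code are valid: H^{MB}_X (J^{MB}_Z)ᵀ = 0, H^{MB}_Z (J^{MB}_X)ᵀ = 0, and J^{MB}_X (J^{MB}_Z)ᵀ = E_k. -/

import Mathlib

open Matrix

/-- The `X`-check matrix of the branch-sticker deformed code, with `d_R = m + 1`.
Column blocks: `u_0` (`Fin n`), `u_1,…,u_m` (`Fin m × Fin nG`, index `j0` is `u_{j0+1}`;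
`u_m = u_{d_R-1}` is the open boundary), `v_1,…,v_m` (`Fin m × Fin rG`, index `i0` is
`v_{i0+1}`). -/
def HMBX (m : ℕ) {n nG rX rG : ℕ} (HX : Matrix (Fin rX) (Fin n) (ZMod 2))
    (HG : Matrix (Fin rG) (Fin nG) (ZMod 2))
    (T : Matrix (Fin rX) (Fin rG) (ZMod 2)) :
    Matrix (Fin rX ⊕ Fin m × Fin rG)
      (Fin n ⊕ (Fin m × Fin nG ⊕ Fin m × Fin rG)) (ZMod 2) :=
  Matrix.of fun r c =>
    match r, c with
    | Sum.inl a, Sum.inl j => HX a j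
    | Sum.inl _, Sum.inr (Sum.inl _) => 0
    | Sum.inl a, Sum.inr (Sum.inr (i, b)) => if (i : ℕ) = 0 then T a b else 0
    | Sum.inr _, Sum.inl _ => 0
    | Sum.inr (j0, a), Sum.inr (Sum.inl (j', c')) => if j' = j0 then HG a c' else 0
    | Sum.inr (j0, a), Sum.inr (Sum.inr (i, b)) =>
        if ((i : ℕ) = (j0 : ℕ) ∨ (i : ℕ) = (j0 : ℕ) + 1) ∧ b = a then 1 else 0

/-- The `Z`-check matrix of the branch-sticker deformed code, with `d_R = m + 1`.
Row blocks: memory `Z` checks (`Fin rZ`) and sticker `Z` checks `i = 1,…,m`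
(`Fin m × Fin nG`, index `i0` is check row `i0+1`). -/
def HMBZ (m : ℕ) {n nG rZ rG : ℕ} (HZ : Matrix (Fin rZ) (Fin n) (ZMod 2))
    (HG : Matrix (Fin rG) (Fin nG) (ZMod 2))
    (S : Matrix (Fin nG) (Fin n) (ZMod 2)) :
    Matrix (Fin rZ ⊕ Fin m × Fin nG)
      (Fin n ⊕ (Fin m × Fin nG ⊕ Fin m × Fin rG)) (ZMod 2) :=
  Matrix.of fun r c =>
    match r, c with
    | Sum.inl a, Sum.inl j => HZ a j
    | Sum.inl _, Sum.inr _ => 0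
    | Sum.inr (i, cc), Sum.inl j => if (i : ℕ) = 0 then S cc j else 0
    | Sum.inr (i, cc), Sum.inr (Sum.inl (j0, c')) =>
        if ((j0 : ℕ) + 1 = (i : ℕ) ∨ (j0 : ℕ) = (i : ℕ)) ∧ c' = cc then 1 else 0
    | Sum.inr (i, cc), Sum.inr (Sum.inr (i', b)) =>
        if (i' : ℕ) = (i : ℕ) then HG b cc else 0


/-- The `X` logical generator matrix of the branch-sticker deformed code:
`J_X` in block `u_0`, `J_X Sᵀ` in each block `u_j`, zero in all `v` blocks. -/
def JMBX (m : ℕ) {n nG rG k : ℕ} (JX : Matrix (Fin k) (Fin n) (ZMod 2))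
    (S : Matrix (Fin nG) (Fin n) (ZMod 2)) :
    Matrix (Fin k) (Fin n ⊕ (Fin m × Fin nG ⊕ Fin m × Fin rG)) (ZMod 2) :=
  Matrix.of fun a c =>
    match c with
    | Sum.inl j => JX a j
    | Sum.inr (Sum.inl (_, c')) => (JX * Sᵀ) a c'
    | Sum.inr (Sum.inr _) => 0

/-- The `Z` logical generator matrix of the branch-sticker deformed code:
`J_Z` in block `u_0`, zero elsewhere. -/
def JMBZ (m nG rG : ℕ) {n k : ℕ} (JZ : Matrix (Fin k) (Fin n) (ZMod 2)) :
    Matrix (Fin k) (Fin n ⊕ (Fin m × Fin nG ⊕ Fin m × Fin rG)) (ZMod 2) :=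
  Matrix.of fun a c =>
    match c with
    | Sum.inl j => JZ a j
    | Sum.inr _ => 0

/-- the logical generator matrices of the branch-sticker deformed
code are valid. -/
theorem JMB_valid (m : ℕ) (hm : 1 ≤ m) {n nG rX rZ rG k : ℕ}
    (HX : Matrix (Fin rX) (Fin n) (ZMod 2))
    (HZ : Matrix (Fin rZ) (Fin n) (ZMod 2))
    (HG : Matrix (Fin rG) (Fin nG) (ZMod 2))
    (S : Matrix (Fin nG) (Fin n) (ZMod 2))
    (T : Matrix (Fin rX) (Fin rG) (ZMod 2))
    (JX JZ : Matrix (Fin k) (Fin n) (ZMod 2))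
    (h1 : HX * JZᵀ = 0)
    (h2 : HZ * JXᵀ = 0)
    (h3 : JX * JZᵀ = 1) :
    HMBX m HX HG T * (JMBZ m nG rG JZ)ᵀ = 0 ∧
      HMBZ m HZ HG S * (JMBX m JX S (rG := rG))ᵀ = 0 ∧
      JMBX m JX S (rG := rG) * (JMBZ m nG rG JZ)ᵀ = 1 := by
  refine ⟨?_, ?_, ?_⟩
  · ext r a
    cases r with
    | inl b =>
        have h := congrFun (congrFun h1 b) a
        simp only [Matrix.mul_apply, Matrix.transpose_apply, Matrix.zero_apply] at h ⊢
        simp only [HMBX, JMBZ, Matrix.of_apply, Fintype.sum_sum_type]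
        simpa using h
    | inr p =>
        simp only [Matrix.mul_apply, Matrix.transpose_apply, Matrix.zero_apply,
          HMBX, JMBZ, Matrix.of_apply, Fintype.sum_sum_type]
        simp
  · ext r a
    cases r with
    | inl b =>
        have h := congrFun (congrFun h2 b) a
        simp only [Matrix.mul_apply, Matrix.transpose_apply, Matrix.zero_apply] at h ⊢
        simp only [HMBZ, JMBX, Matrix.of_apply, Fintype.sum_sum_type]
        simpa using h
    | inr p =>
        obtain ⟨i, cc⟩ := p
        simp only [Matrix.mul_apply, Matrix.transpose_apply, Matrix.zero_apply,
          HMBZ, JMBX, Matrix.of_apply, Fintype.sum_sum_type, Fintype.sum_prod_type]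
        simp only [mul_zero, Finset.sum_const_zero, add_zero, ite_mul, one_mul, zero_mul]
        have two : ∀ x : ZMod 2, x + x = 0 := by decide
        have key : ∀ (P : Prop) [Decidable P] (f : Fin nG → ZMod 2),
            (∑ x1 : Fin nG, if P ∧ x1 = cc then f x1 else 0) = if P then f cc else 0 := by
          intro P _ f
          by_cases hP : P <;> simp [hP]
        simp only [key]
        have hmc : ∀ x : Fin n, S cc x * JX a x = JX a x * S cc x := fun x => mul_comm _ _
        simp only [hmc]
        set X : ZMod 2 := ∑ x : Fin n, JX a x * S cc x with hX
        have split : ∀ (p q : Prop) [Decidable p] [Decidable q], ¬(p ∧ q) →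
            (if p ∨ q then X else 0) = (if p then X else 0) + (if q then X else 0) := by
          intro p q _ _ hpq
          by_cases hp : p <;> by_cases hq : q <;> simp [hp, hq]
          exact absurd ⟨hp, hq⟩ hpq
        by_cases hi : (i : ℕ) = 0
        · have heq : ∀ x : Fin m, ((x : ℕ) + 1 = 0 ∨ (x : ℕ) = 0) ↔ x = ⟨0, hm⟩ := by
            intro x
            simp [Fin.ext_iff]
          simp only [hi, if_true, heq]
          rw [Finset.sum_ite_eq' Finset.univ (⟨0, hm⟩ : Fin m) (fun _ => X)]
          simp [two]
          exact two X
        · simp only [hi, if_false, zero_add]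
          have hdis : ∀ x : Fin m, ¬(((x : ℕ) + 1 = (i : ℕ)) ∧ (x : ℕ) = (i : ℕ)) := by
            intro x ⟨h1', h2'⟩; omega
          rw [Finset.sum_congr rfl (fun x _ => split _ _ (hdis x)), Finset.sum_add_distrib]
          have hi1 : (i : ℕ) - 1 < m := by omega
          have e1 : ∀ x : Fin m, ((x : ℕ) + 1 = (i : ℕ)) ↔ x = ⟨(i : ℕ) - 1, hi1⟩ := by
            intro x; simp only [Fin.ext_iff, Fin.val_mk]; omega
          have e2 : ∀ x : Fin m, ((x : ℕ) = (i : ℕ)) ↔ x = i := by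
            intro x; exact (Fin.ext_iff).symm
          simp only [e1, e2]
          rw [Finset.sum_ite_eq' Finset.univ (⟨(i : ℕ) - 1, hi1⟩ : Fin m) (fun _ => X),
            Finset.sum_ite_eq' Finset.univ i (fun _ => X)]
          simp [two]
  · ext b a
    have h := congrFun (congrFun h3 b) a
    simp only [Matrix.mul_apply, Matrix.transpose_apply] at h ⊢
    simp only [JMBX, JMBZ, Matrix.of_apply, Fintype.sum_sum_type]
    simpa using h
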